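/- The zero-delay probability function p₀(r) = (1 + exp(−r)) / (2(exp(r/2) + exp(−r/2) − 1)) is strictly decreasing on (0, ∞): for all 0 < r₁ < r₂ one has p₀(r₂) < p₀(r₁). (When the ratio between the temporal gap and the arrival interval increases, the probability of zero delay decreases.) -/

import Mathlib

open Real

/-- The zero-delay probability `p₀(r) = (1 + e^{−r})/(2(e^{r/2} + e^{−r/2} − 1))`
is strictly decreasing on `(0, ∞)`. -/
theorem p0_strictAntiOn :
    ∀ r₁ r₂ : ℝ, 0 < r₁ → r₁ < r₂ →
      (1 + Real.exp (-r₂)) / (2 * (Real.exp (r₂ / 2) + Real.exp (-r₂ / 2) - 1)) <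
      (1 + Real.exp (-r₁)) / (2 * (Real.exp (r₁ / 2) + Real.exp (-r₁ / 2) - 1)) := by
  intro r₁ r₂ h1 h12
  set a := Real.exp (r₁ / 2) with ha
  set b := Real.exp (r₂ / 2) with hb
  have ha1 : 1 < a := Real.one_lt_exp_iff.2 (by linarith)
  have hb1 : 1 < b := Real.one_lt_exp_iff.2 (by linarith)
  have hab : a < b := Real.exp_lt_exp.2 (by linarith)
  have ea : Real.exp (-r₁) = 1 / (a * a) := by
    rw [ha, ← Real.exp_add, Real.exp_neg, one_div]
    congr 1
    ring
  have eb : Real.exp (-r₂) = 1 / (b * b) := by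
    rw [hb, ← Real.exp_add, Real.exp_neg, one_div]
    congr 1
    ring
  have ea2 : Real.exp (-r₁ / 2) = 1 / a := by
    rw [ha, show -r₁ / 2 = -(r₁ / 2) by ring, Real.exp_neg, one_div]
  have eb2 : Real.exp (-r₂ / 2) = 1 / b := by
    rw [hb, show -r₂ / 2 = -(r₂ / 2) by ring, Real.exp_neg, one_div]
  rw [ea, eb, ea2, eb2]
  have hpa : 0 < a := by linarith
  have hpb : 0 < b := by linarith
  have hda : 0 < 2 * (a + 1 / a - 1) := by
    have : 0 < 1 / a := by positivity
    nlinarith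
  have hdb : 0 < 2 * (b + 1 / b - 1) := by
    have : 0 < 1 / b := by positivity
    nlinarith
  rw [div_lt_div_iff₀ hdb hda]
  have hane : a ≠ 0 := ne_of_gt hpa
  have hbne : b ≠ 0 := ne_of_gt hpb
  field_simp
  nlinarith [mul_pos hpa hpb, sq_nonneg (a*b - 1), sq_nonneg (a - b),
    mul_pos (mul_pos hpa hpa) (mul_pos hpb hpb),
    mul_pos (sub_pos.2 hab) (mul_pos hpa hpb),
    mul_pos (mul_pos (sub_pos.2 ha1) (sub_pos.2 hb1)) (mul_pos hpa hpb)]
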